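/- Let q ≥ 2 be an even natural number, let x ∈ Sym(ℤ) be the translation i ↦ i + 1, and let y ∈ Sym(ℤ) be the q-cycle (1, 2, …, q), i.e. the permutation with y(i) = i + 1 for 1 ≤ i ≤ q − 1, y(q) = 1, and y(i) = i for all other i. Then the subgroup of Sym(ℤ) generated by {x, y} is exactly the group of almost-translations: a permutation σ of ℤ lies in this subgroup if and only if there exists k ∈ ℤ such that the set {i ∈ ℤ | σ(i) ≠ i + k} is finite. -/

import Mathlib

open Equiv

/-- The almost-translations form a subgroup of `Sym(ℤ)`. -/
private def almostTranslations : Subgroup (Equiv.Perm ℤ) where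
  carrier := {σ | ∃ k : ℤ, {i : ℤ | σ i ≠ i + k}.Finite}
  one_mem' := ⟨0, by simp⟩
  mul_mem' := by
    rintro σ τ ⟨k, hk⟩ ⟨l, hl⟩
    refine ⟨l + k, Set.Finite.subset (Set.Finite.union hl
      (hk.preimage (Set.injOn_of_injective τ.injective))) ?_⟩
    intro i hi
    simp only [Set.mem_setOf_eq, Equiv.Perm.mul_apply] at hi
    by_contra hcon
    simp only [Set.mem_union, Set.mem_setOf_eq, Set.mem_preimage] at hcon
    push_neg at hcon
    obtain ⟨h1, h2⟩ := hcon
    exact hi (by rw [h2, h1]; ring)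
  inv_mem' := by
    rintro σ ⟨k, hk⟩
    refine ⟨-k, Set.Finite.subset (hk.image σ) ?_⟩
    intro i hi
    simp only [Set.mem_setOf_eq] at hi
    refine ⟨σ⁻¹ i, ?_, (Equiv.apply_symm_apply σ i : σ (σ⁻¹ i) = i)⟩
    simp only [Set.mem_setOf_eq]
    intro hc
    rw [show σ (σ⁻¹ i) = i from Equiv.apply_symm_apply σ i] at hc
    omega

/-- The 3-cycle `(a b c)`. -/
private def cyc (a b c : ℤ) : Equiv.Perm ℤ := Equiv.swap a b * Equiv.swap b c

private lemma cyc_apply (a b c : ℤ) (hab : a ≠ b) (hbc : b ≠ c) (hac : a ≠ c) (i : ℤ) :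
    cyc a b c i = if i = a then b else if i = b then c else if i = c then a else i := by
  simp only [cyc, Equiv.Perm.mul_apply, Equiv.swap_apply_def]
  split_ifs <;> omega

private lemma cyc_inv (a b c : ℤ) :
    (cyc a b c)⁻¹ = Equiv.swap b c * Equiv.swap a b := by
  simp [cyc, mul_inv_rev]

set_option maxHeartbeats 1000000 in
/-- For even `q ≥ 2`, the subgroup of `Sym(ℤ)` generated by the
translation `x : i ↦ i + 1` and the `q`-cycle `y = (1 2 … q)` consists exactly of the
almost-translations. -/
theorem closure_translation_cycle_eq_almost_translations
    (q : ℕ) (hq : 2 ≤ q) (hqeven : 2 ∣ q)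
    (x y : Equiv.Perm ℤ) (hx : x = Equiv.addRight (1 : ℤ))
    (hy₁ : ∀ i : ℤ, 1 ≤ i → i ≤ (q : ℤ) - 1 → y i = i + 1)
    (hy₂ : y (q : ℤ) = 1)
    (hy₃ : ∀ i : ℤ, i < 1 ∨ (q : ℤ) < i → y i = i) :
    ∀ σ : Equiv.Perm ℤ,
      σ ∈ Subgroup.closure ({x, y} : Set (Equiv.Perm ℤ)) ↔
        ∃ k : ℤ, {i : ℤ | σ i ≠ i + k}.Finite := by
  set H := Subgroup.closure ({x, y} : Set (Equiv.Perm ℤ)) with hHdef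
  have hQ : (2 : ℤ) ≤ (q : ℤ) := by exact_mod_cast hq
  have hxH : x ∈ H := Subgroup.subset_closure (Set.mem_insert _ _)
  have hyH : y ∈ H := Subgroup.subset_closure (Set.mem_insert_iff.mpr (Or.inr rfl))
  have hxm : ∀ (m i : ℤ), (x ^ m) i = i + m := by
    intro m i; rw [hx]; simp
  have ecα := cyc_apply 1 2 ((q:ℤ)+1) (by omega) (by omega) (by omega)
  -- α = y x y⁻¹ x⁻¹ is the 3-cycle (1, 2, q+1)
  have hA : cyc 1 2 ((q:ℤ)+1) * x * y = y * x := by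
    ext i
    simp only [Equiv.Perm.mul_apply, hx, Equiv.coe_addRight]
    rcases show i ≤ -1 ∨ i = 0 ∨ (1 ≤ i ∧ i ≤ (q:ℤ)-2) ∨ i = (q:ℤ)-1 ∨ i = (q:ℤ) ∨
        (q:ℤ)+1 ≤ i by omega with h|h|h|h|h|h
    · rw [hy₃ i (Or.inl (by omega)), hy₃ (i+1) (Or.inl (by omega)), ecα]
      split_ifs <;> omega
    · have e1 : y i = i := hy₃ i (Or.inl (by omega))
      have e2 : y (i+1) = 2 := by
        rw [show i+1 = (1:ℤ) by omega, hy₁ 1 le_rfl (by omega)]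
        try norm_num
      rw [e1, e2, ecα]
      split_ifs <;> omega
    · have e1 : y i = i + 1 := hy₁ i h.1 (by omega)
      have e2 : y (i+1) = i+2 := by rw [hy₁ (i+1) (by omega) (by omega)]; ring
      rw [e1, e2, ecα]
      split_ifs <;> omega
    · have e1 : y i = i + 1 := hy₁ i (by omega) (by omega)
      have e2 : y (i+1) = 1 := by rw [show i+1 = (q:ℤ) by omega]; exact hy₂
      rw [e1, e2, ecα]
      split_ifs <;> omega
    · have e1 : y i = 1 := by rw [h]; exact hy₂
      have e2 : y (i+1) = i+1 := hy₃ _ (Or.inr (by omega))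
      rw [e1, e2, ecα]
      split_ifs <;> omega
    · rw [hy₃ i (Or.inr (by omega)), hy₃ (i+1) (Or.inr (by omega)), ecα]
      split_ifs <;> omega
  have hαmem : cyc 1 2 ((q:ℤ)+1) ∈ H := by
    have h' : cyc 1 2 ((q:ℤ)+1) = y * x * y⁻¹ * x⁻¹ := by rw [← hA]; group
    rw [h']
    exact mul_mem (mul_mem (mul_mem hyH hxH) (inv_mem hyH)) (inv_mem hxH)
  -- δ = (1,2,3) ∈ H
  have hδmem : cyc 1 2 3 ∈ H := by
    rcases eq_or_lt_of_le hq with h2 | h3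
    · rw [show (3:ℤ) = (q:ℤ)+1 by omega]; exact hαmem
    · have hQ3 : (3 : ℤ) ≤ (q : ℤ) := by exact_mod_cast h3
      have ecβ := cyc_apply 2 3 ((q:ℤ)+2) (by omega) (by omega) (by omega)
      have ecγ := cyc_apply ((q:ℤ)+1) 3 ((q:ℤ)+2) (by omega) (by omega) (by omega)
      have ecδ := cyc_apply 1 2 3 (by omega) (by omega) (by omega)
      have hB : cyc 2 3 ((q:ℤ)+2) * x = x * cyc 1 2 ((q:ℤ)+1) := by
        ext i
        simp only [Equiv.Perm.mul_apply, hx, Equiv.coe_addRight, ecα, ecβ]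
        split_ifs <;> omega
      have hβmem : cyc 2 3 ((q:ℤ)+2) ∈ H := by
        have h' : cyc 2 3 ((q:ℤ)+2) = x * cyc 1 2 ((q:ℤ)+1) * x⁻¹ := by rw [← hB]; group
        rw [h']; exact mul_mem (mul_mem hxH hαmem) (inv_mem hxH)
      -- γ = (q+1, 3, q+2) = α β α⁻¹
      have hC : cyc ((q:ℤ)+1) 3 ((q:ℤ)+2) * cyc 1 2 ((q:ℤ)+1)
          = cyc 1 2 ((q:ℤ)+1) * cyc 2 3 ((q:ℤ)+2) := by
        ext i
        simp only [Equiv.Perm.mul_apply, ecα, ecβ, ecγ]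
        split_ifs <;> omega
      have hγmem : cyc ((q:ℤ)+1) 3 ((q:ℤ)+2) ∈ H := by
        have h' : cyc ((q:ℤ)+1) 3 ((q:ℤ)+2)
            = cyc 1 2 ((q:ℤ)+1) * cyc 2 3 ((q:ℤ)+2) * (cyc 1 2 ((q:ℤ)+1))⁻¹ := by
          rw [← hC]; group
        rw [h']; exact mul_mem (mul_mem hαmem hβmem) (inv_mem hαmem)
      -- δ = γ α γ⁻¹
      have hD : cyc 1 2 3 * cyc ((q:ℤ)+1) 3 ((q:ℤ)+2)
          = cyc ((q:ℤ)+1) 3 ((q:ℤ)+2) * cyc 1 2 ((q:ℤ)+1) := by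
        ext i
        simp only [Equiv.Perm.mul_apply, ecα, ecγ, ecδ]
        split_ifs <;> omega
      have h' : cyc 1 2 3
          = cyc ((q:ℤ)+1) 3 ((q:ℤ)+2) * cyc 1 2 ((q:ℤ)+1)
            * (cyc ((q:ℤ)+1) 3 ((q:ℤ)+2))⁻¹ := by rw [← hD]; group
      rw [h']; exact mul_mem (mul_mem hγmem hαmem) (inv_mem hγmem)
  -- all consecutive 3-cycles
  have hcfam : ∀ n : ℤ, cyc n (n+1) (n+2) ∈ H := by
    intro n
    have ecn := cyc_apply n (n+1) (n+2) (by omega) (by omega) (by omega)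
    have ecδ := cyc_apply 1 2 3 (by omega) (by omega) (by omega)
    have hE : cyc n (n+1) (n+2) * x^(n-1) = x^(n-1) * cyc 1 2 3 := by
      ext i
      simp only [Equiv.Perm.mul_apply, hxm, ecn, ecδ]
      split_ifs <;> omega
    have h' : cyc n (n+1) (n+2) = x^(n-1) * cyc 1 2 3 * (x^(n-1))⁻¹ := by
      rw [← hE]; group
    rw [h']
    exact mul_mem (mul_mem (zpow_mem hxH _) hδmem) (inv_mem (zpow_mem hxH _))
  -- shrink the q-cycle down to the transposition (1 2)
  have key : ∀ j : ℕ, 2 * j + 2 ≤ q → ∃ s ∈ H,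
      (∀ i : ℤ, 1 ≤ i → i ≤ (q:ℤ) - 2*(j:ℤ) - 1 → s i = i + 1) ∧
      s ((q:ℤ) - 2*(j:ℤ)) = 1 ∧
      (∀ i : ℤ, i < 1 ∨ (q:ℤ) - 2*(j:ℤ) < i → s i = i) := by
    intro j
    induction j with
    | zero =>
      intro _
      refine ⟨y, hyH, ?_, ?_, ?_⟩
      · intro i h1 h2
        exact hy₁ i h1 (by push_cast at h2 ⊢; omega)
      · rw [show (q:ℤ) - 2*((0:ℕ):ℤ) = (q:ℤ) by push_cast; ring]; exact hy₂
      · intro i hi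
        exact hy₃ i (by push_cast at hi ⊢; omega)
    | succ j ih =>
      intro hle
      obtain ⟨s, hsH, hs₁, hs₂, hs₃⟩ := ih (by omega)
      obtain ⟨m, hm⟩ : ∃ m : ℤ, m = (q:ℤ) - 2*(j:ℤ) := ⟨_, rfl⟩
      rw [← hm] at hs₁ hs₂ hs₃
      have hm4 : 4 ≤ m := by omega
      have hce : (Equiv.swap (m-1) m * Equiv.swap (m-2) (m-1) : Equiv.Perm ℤ) ∈ H := by
        have h1 : (Equiv.swap (m-1) m * Equiv.swap (m-2) (m-1) : Equiv.Perm ℤ)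
            = (cyc (m-2) (m-1) m)⁻¹ := by rw [cyc_inv]
        have h2 := hcfam (m-2)
        rw [show m-2+1 = m-1 by ring, show m-2+2 = m by ring] at h2
        rw [h1]; exact inv_mem h2
      have hg : (q:ℤ) - 2*((j+1:ℕ):ℤ) = m - 2 := by push_cast; omega
      rw [hg]
      refine ⟨s * (Equiv.swap (m-1) m * Equiv.swap (m-2) (m-1)), mul_mem hsH hce,
        ?_, ?_, ?_⟩
      · intro i h1 h2
        simp only [Equiv.Perm.mul_apply]
        rw [Equiv.swap_apply_of_ne_of_ne (a := m-2) (b := m-1) (by omega) (by omega),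
          Equiv.swap_apply_of_ne_of_ne (a := m-1) (b := m) (by omega) (by omega)]
        exact hs₁ i h1 (by omega)
      · simp only [Equiv.Perm.mul_apply]
        rw [Equiv.swap_apply_left, Equiv.swap_apply_left]
        exact hs₂
      · intro i hi
        simp only [Equiv.Perm.mul_apply]
        rcases show i < 1 ∨ i = m - 1 ∨ i = m ∨ m < i by omega with h|h|h|h
        · rw [Equiv.swap_apply_of_ne_of_ne (a := m-2) (b := m-1) (by omega) (by omega),
            Equiv.swap_apply_of_ne_of_ne (a := m-1) (b := m) (by omega) (by omega)]
          exact hs₃ i (Or.inl h)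
        · rw [h, Equiv.swap_apply_right,
            Equiv.swap_apply_of_ne_of_ne (a := m-1) (b := m) (by omega) (by omega)]
          rw [hs₁ (m-2) (by omega) (by omega)]
          ring
        · rw [h, Equiv.swap_apply_of_ne_of_ne (a := m-2) (b := m-1) (by omega) (by omega),
            Equiv.swap_apply_right]
          rw [hs₁ (m-1) (by omega) (by omega)]
          ring
        · rw [Equiv.swap_apply_of_ne_of_ne (a := m-2) (b := m-1) (by omega) (by omega),
            Equiv.swap_apply_of_ne_of_ne (a := m-1) (b := m) (by omega) (by omega)]
          exact hs₃ i (Or.inr (by omega))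
  have hsw12 : (Equiv.swap 1 2 : Equiv.Perm ℤ) ∈ H := by
    obtain ⟨r, hr⟩ := hqeven
    have hr1 : 1 ≤ r := by omega
    obtain ⟨s, hsH, hs₁, hs₂, hs₃⟩ := key (r - 1) (by omega)
    have hq2 : (q:ℤ) - 2*(((r-1:ℕ)):ℤ) = 2 := by omega
    have hseq : s = Equiv.swap 1 2 := by
      ext i
      rcases show i < 1 ∨ i = 1 ∨ i = 2 ∨ 2 < i by omega with h|h|h|h
      · rw [hs₃ i (Or.inl h), Equiv.swap_apply_of_ne_of_ne (by omega) (by omega)]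
      · rw [h, hs₁ 1 le_rfl (by omega), Equiv.swap_apply_left]
        norm_num
      · rw [h, Equiv.swap_apply_right, ← hq2]
        exact hs₂
      · rw [hs₃ i (Or.inr (by omega)),
          Equiv.swap_apply_of_ne_of_ne (by omega) (by omega)]
    rw [← hseq]; exact hsH
  -- all adjacent transpositions
  have hadj : ∀ n : ℤ, (Equiv.swap n (n+1) : Equiv.Perm ℤ) ∈ H := by
    intro n
    have hE : (Equiv.swap n (n+1) : Equiv.Perm ℤ) * x^(n-1)
        = x^(n-1) * Equiv.swap 1 2 := by
      ext i
      simp only [Equiv.Perm.mul_apply, hxm, Equiv.swap_apply_def]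
      split_ifs <;> omega
    have h' : (Equiv.swap n (n+1) : Equiv.Perm ℤ)
        = x^(n-1) * Equiv.swap 1 2 * (x^(n-1))⁻¹ := by rw [← hE]; group
    rw [h']
    exact mul_mem (mul_mem (zpow_mem hxH _) hsw12) (inv_mem (zpow_mem hxH _))
  -- all transpositions
  have hswall : ∀ a b : ℤ, (Equiv.swap a b : Equiv.Perm ℤ) ∈ H := by
    have hlt : ∀ a b : ℤ, a < b → (Equiv.swap a b : Equiv.Perm ℤ) ∈ H := by
      intro a b hab
      refine Int.le_induction (m := a + 1)
        (motive := fun c _ => (Equiv.swap a c : Equiv.Perm ℤ) ∈ H)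
        (hadj a) (fun n hn ihn => ?_) b (by omega)
      have heq : (Equiv.swap a (n+1) : Equiv.Perm ℤ)
          = Equiv.swap n (n+1) * Equiv.swap a n * Equiv.swap n (n+1) := by
        rw [Equiv.swap_comm]
        exact (Equiv.swap_mul_swap_mul_swap (x := a) (y := n) (z := n+1)
          (by omega) (by omega)).symm
      show (Equiv.swap a (n+1) : Equiv.Perm ℤ) ∈ H
      rw [heq]
      exact mul_mem (mul_mem (hadj n) ihn) (hadj n)
    intro a b
    rcases lt_trichotomy a b with h|h|h
    · exact hlt a b h
    · rw [h, Equiv.swap_self, ← Equiv.Perm.one_def]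
      exact one_mem H
    · rw [Equiv.swap_comm]; exact hlt b a h
  -- finitely supported permutations lie in H
  have hfin : ∀ (n : ℕ) (s : Finset ℤ) (τ : Equiv.Perm ℤ),
      s.card ≤ n → (∀ i, τ i ≠ i → i ∈ s) → τ ∈ H := by
    intro n
    induction n with
    | zero =>
      intro s τ hcard hsupp
      have hτ : τ = 1 := by
        ext i
        by_contra hne
        have h1 : i ∈ s := hsupp i (by simpa using hne)
        have : s = ∅ := Finset.card_eq_zero.mp (Nat.le_zero.mp hcard)
        simp [this] at h1
      rw [hτ]; exact one_mem H
    | succ n ihn =>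
      intro s τ hcard hsupp
      by_cases hfix : ∀ i, τ i = i
      · have : τ = 1 := Equiv.ext hfix
        rw [this]; exact one_mem H
      · push_neg at hfix
        obtain ⟨a, ha⟩ := hfix
        have haS : a ∈ s := hsupp a ha
        have hsupp' : ∀ i, (Equiv.swap a (τ a) * τ) i ≠ i → i ∈ s.erase a := by
          intro i hi
          have hiA : i ≠ a := by
            intro h; apply hi
            rw [h]
            simp only [Equiv.Perm.mul_apply]
            exact Equiv.swap_apply_right a (τ a)
          have hiτ : τ i ≠ i := by
            intro h; apply hi
            simp only [Equiv.Perm.mul_apply, h]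
            refine Equiv.swap_apply_of_ne_of_ne hiA ?_
            intro h2
            exact ha (τ.injective (by rw [← h2, h, h2]))
          exact Finset.mem_erase.mpr ⟨hiA, hsupp i hiτ⟩
        have hcard' : (s.erase a).card ≤ n := by
          have := Finset.card_erase_of_mem haS
          omega
        have hmem' := ihn (s.erase a) (Equiv.swap a (τ a) * τ) hcard' hsupp'
        have hτeq : τ = Equiv.swap a (τ a) * (Equiv.swap a (τ a) * τ) := by
          rw [← mul_assoc, Equiv.swap_mul_self, one_mul]
        rw [hτeq]
        exact mul_mem (hswall _ _) hmem'
  intro σ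
  constructor
  · -- forward: closure ⊆ almost-translations
    intro hσ
    have hsub : ({x, y} : Set (Equiv.Perm ℤ)) ⊆ ↑almostTranslations := by
      intro z hz
      rcases hz with rfl | hz
      · refine ⟨1, ?_⟩
        rw [hx]
        convert Set.finite_empty
        ext i
        simp
      · rw [Set.mem_singleton_iff] at hz
        subst hz
        refine ⟨0, Set.Finite.subset (Set.finite_Icc (1:ℤ) (q:ℤ)) ?_⟩
        intro i hi
        simp only [Set.mem_setOf_eq, add_zero] at hi
        have hi' : ¬(i < 1 ∨ (q:ℤ) < i) := fun hor => hi (hy₃ i hor)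
        rw [Set.mem_Icc]
        omega
    exact (Subgroup.closure_le almostTranslations).mpr hsub hσ
  · rintro ⟨k, hk⟩
    have hτfin : {i : ℤ | (σ * x^(-k)) i ≠ i}.Finite := by
      refine Set.Finite.subset (hk.image (fun j => j + k)) ?_
      intro i hi
      simp only [Set.mem_setOf_eq, Equiv.Perm.mul_apply, hxm] at hi
      refine ⟨i - k, ?_, by ring⟩
      simp only [Set.mem_setOf_eq]
      intro hc
      apply hi
      rw [show i + -k = i - k by ring, hc]
      ring
    have hτH := hfin hτfin.toFinset.card hτfin.toFinset (σ * x^(-k)) le_rfl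
      (fun i hi => hτfin.mem_toFinset.mpr hi)
    have hσeq : σ = (σ * x^(-k)) * x^k := by
      rw [mul_assoc, ← zpow_add]
      simp
    rw [hσeq]
    exact mul_mem hτH (zpow_mem hxH k)
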